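/- Let X ⊂ ℝ^d be a finite point set and G(X) its unit-distance graph. Suppose p, q ∈ X are connected in G(X) and let π be a geodesic from p to q contained in a region R ⊂ ℝ^d. Then the number of edges of π satisfies |π| ≤ C_d · vol(R + B(0, 1/2)), where C_d = 2^{d+1}/vol(B(0,1/2)) and R + B(0,1/2) is the Minkowski sum. -/

import Mathlib

open MeasureTheory

/-- The chemical (graph) distance between `p` and `q` in the unit-distance graph on the
point set `S ⊆ ℝ^d`: the least number of edges in a path within `S` joining `p` and `q`
whose consecutive points are at Euclidean distance at most `1`.  It equals `⊤` when no
such path exists. -/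
noncomputable def gdist {d : ℕ} (S : Set (EuclideanSpace ℝ (Fin d)))
    (p q : EuclideanSpace ℝ (Fin d)) : ℕ∞ :=
  sInf {n : ℕ∞ | ∃ (k : ℕ) (c : Fin (k + 1) → EuclideanSpace ℝ (Fin d)),
    n = (k : ℕ∞) ∧ c 0 = p ∧ c (Fin.last k) = q ∧ (∀ i, c i ∈ S) ∧
    ∀ i : Fin k, dist (c i.castSucc) (c i.succ) ≤ 1}


open Pointwise in
/-- A geodesic `π` from `p` to `q` in the unit-distance graph on a finite set `X ⊆ ℝ^d`
which is contained in a region `R` has at most `C_d · vol(R + B(0,1/2))` edges, where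
`C_d = 2^(d+1) / vol(B(0,1/2))` and `R + B(0,1/2)` is the Minkowski sum. -/
theorem geodesic_length_le_volume
    {d : ℕ} (X : Set (EuclideanSpace ℝ (Fin d))) (hX : X.Finite)
    (R : Set (EuclideanSpace ℝ (Fin d)))
    (p q : EuclideanSpace ℝ (Fin d)) (hp : p ∈ X) (hq : q ∈ X)
    (hconn : gdist X p q ≠ ⊤)
    {k : ℕ} (π : Fin (k + 1) → EuclideanSpace ℝ (Fin d))
    (hmem : ∀ i, π i ∈ X) (hR : ∀ i, π i ∈ R)
    (h0 : π 0 = p) (hlast : π (Fin.last k) = q)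
    (hstep : ∀ i : Fin k, dist (π i.castSucc) (π i.succ) ≤ 1)
    (hgeo : (k : ℕ∞) = gdist X p q) :
    (k : ENNReal) ≤
      (2 ^ (d + 1) / volume (Metric.ball (0 : EuclideanSpace ℝ (Fin d)) (1 / 2))) *
        volume (R + Metric.ball (0 : EuclideanSpace ℝ (Fin d)) (1 / 2)) := by
  classical
  -- Key separation: vertices at index distance ≥ 2 are at Euclidean distance > 1.
  have key : ∀ (a b : ℕ) (ha : a < k + 1) (hb : b < k + 1), a + 2 ≤ b →
      1 < dist (π ⟨a, ha⟩) (π ⟨b, hb⟩) := by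
    intro a b ha hb hab
    by_contra hle
    push_neg at hle
    have hbk : b ≤ k := by omega
    set m : ℕ := a + 1 + (k - b) with hm
    have hmk : m + 1 ≤ k := by omega
    -- shortcut path
    set c : Fin (m + 1) → EuclideanSpace ℝ (Fin d) := fun t =>
      if h : (t : ℕ) ≤ a then π ⟨t, by omega⟩
      else π ⟨(t : ℕ) - a - 1 + b, by have := t.isLt; omega⟩ with hc
    have hgle : gdist X p q ≤ (m : ℕ∞) := by
      apply sInf_le
      refine ⟨m, c, rfl, ?_, ?_, ?_, ?_⟩
      · have : ((0 : Fin (m + 1)) : ℕ) = 0 := rfl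
        simp only [hc, this]
        rw [dif_pos (by omega)]
        rw [← h0]; congr 1
      · have hval : ((Fin.last m : Fin (m + 1)) : ℕ) = m := rfl
        have hcond : ¬ ((Fin.last m : Fin (m + 1)) : ℕ) ≤ a := by rw [hval]; omega
        simp only [hc]
        rw [dif_neg hcond]
        rw [← hlast]
        refine congrArg π (Fin.ext ?_)
        simp only [Fin.val_mk, Fin.val_last]
        omega
      · intro i
        simp only [hc]
        split <;> exact hmem _
      · intro t
        have h1 : ((t.castSucc : Fin (m + 1)) : ℕ) = (t : ℕ) := rfl
        have h2 : ((t.succ : Fin (m + 1)) : ℕ) = (t : ℕ) + 1 := rfl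
        have htm : (t : ℕ) < m := t.isLt
        simp only [hc, h1, h2]
        rcases lt_trichotomy ((t : ℕ) + 1) (a + 1) with h | h | h
        · rw [dif_pos (by omega), dif_pos (by omega)]
          have := hstep ⟨(t : ℕ), by omega⟩
          simpa using this
        · rw [dif_pos (by omega), dif_neg (by omega)]
          have ha' : (⟨(t : ℕ), by omega⟩ : Fin (k + 1)) = ⟨a, ha⟩ := by
            ext; simp; omega
          have hb' : (⟨(t : ℕ) + 1 - a - 1 + b, by omega⟩ : Fin (k + 1)) = ⟨b, hb⟩ := by
            ext; simp; omega
          rw [ha', hb']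
          exact hle
        · rw [dif_neg (by omega), dif_neg (by omega)]
          have h' := hstep ⟨(t : ℕ) - a - 1 + b, by omega⟩
          convert h' using 3 <;>
            (ext; simp only [Fin.coe_castSucc, Fin.val_succ] <;> omega)
    rw [← hgeo] at hgle
    have : k ≤ m := by exact_mod_cast hgle
    omega
  -- centers of disjoint balls
  set n : ℕ := k / 2 + 1 with hn
  set x : Fin n → EuclideanSpace ℝ (Fin d) := fun s => π ⟨2 * s, by have := s.isLt; omega⟩
    with hx
  set v : ENNReal := volume (Metric.ball (0 : EuclideanSpace ℝ (Fin d)) (1 / 2)) with hv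
  set V : ENNReal := volume (R + Metric.ball (0 : EuclideanSpace ℝ (Fin d)) (1 / 2)) with hV
  have hv0 : v ≠ 0 := by
    rw [hv]
    exact (Metric.measure_ball_pos volume (0 : EuclideanSpace ℝ (Fin d))
      (by norm_num : (0:ℝ) < 1/2)).ne'
  have hvtop : v ≠ ⊤ := measure_ball_lt_top.ne
  -- the balls are pairwise disjoint
  have hdisj : ((Finset.univ : Finset (Fin n)) : Set (Fin n)).PairwiseDisjoint
      (fun s => Metric.ball (x s) (1/2)) := by
    intro s _ t _ hst
    have hdist : 1 < dist (x s) (x t) := by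
      rcases lt_or_gt_of_ne (fun h : (s : ℕ) = (t : ℕ) => hst (Fin.ext h)) with h | h
      · exact key (2 * s) (2 * t) _ _ (by omega)
      · rw [dist_comm]
        exact key (2 * t) (2 * s) _ _ (by omega)
    exact Metric.ball_disjoint_ball (by linarith)
  -- each ball lies in R + B(0, 1/2)
  have hsub : ∀ s : Fin n, Metric.ball (x s) (1/2) ⊆
      R + Metric.ball (0 : EuclideanSpace ℝ (Fin d)) (1/2) := by
    intro s y hy
    have hxy : y = x s + (y - x s) := by abel
    rw [hxy]
    exact Set.add_mem_add (hR _) (by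
      simp only [Metric.mem_ball, dist_zero_right] at *
      simpa [dist_eq_norm] using hy)
  -- volume count
  have hcount : (n : ENNReal) * v ≤ V := by
    have h1 : volume (⋃ s ∈ (Finset.univ : Finset (Fin n)), Metric.ball (x s) (1/2))
        = ∑ s : Fin n, volume (Metric.ball (x s) (1/2)) :=
      measure_biUnion_finset hdisj fun s _ => Metric.isOpen_ball.measurableSet
    have h2 : ∀ s : Fin n, volume (Metric.ball (x s) (1/2)) = v := fun s =>
      Measure.addHaar_ball_center volume (x s) (1/2)
    have h3 : (⋃ s ∈ (Finset.univ : Finset (Fin n)), Metric.ball (x s) (1/2)) ⊆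
        R + Metric.ball (0 : EuclideanSpace ℝ (Fin d)) (1/2) := by
      simp only [Set.iUnion_subset_iff]
      intro s _
      exact hsub s
    calc (n : ENNReal) * v = ∑ s : Fin n, volume (Metric.ball (x s) (1/2)) := by
          simp only [h2, Finset.sum_const, Finset.card_univ, Fintype.card_fin, nsmul_eq_mul]
      _ = volume (⋃ s ∈ (Finset.univ : Finset (Fin n)), Metric.ball (x s) (1/2)) := h1.symm
      _ ≤ V := measure_mono h3
  -- conclude
  have hrw : (2 ^ (d + 1) / v) * V = 2 ^ (d + 1) * V / v := by
    rw [div_eq_mul_inv, div_eq_mul_inv]; ring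
  rw [hrw, ENNReal.le_div_iff_mul_le (Or.inl hv0) (Or.inl hvtop)]
  have hkn : k ≤ 2 * n := by omega
  calc (k : ENNReal) * v ≤ ((2 * n : ℕ) : ENNReal) * v :=
        mul_le_mul_left (Nat.cast_le.mpr hkn) v
    _ = 2 * ((n : ENNReal) * v) := by push_cast; ring
    _ ≤ 2 * V := by gcongr
    _ ≤ 2 ^ (d + 1) * V := by
        gcongr
        calc (2 : ENNReal) = 2 ^ 1 := (pow_one 2).symm
          _ ≤ 2 ^ (d + 1) := pow_le_pow_right₀ (by norm_num) (by omega)
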